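/- Let M = U_{n,r} be the uniform matroid with 0 < r < n and let F be a flag of type (α_1,…,α_k) ⊨ n. Set i_0 = min{i : α_1+⋯+α_i ≥ r}, r' = α_1+⋯+α_{i_0−1}, r'' = r'+α_{i_0}. Then the matroid M/F attached to the face π_{P_M}(F) decomposes as M/F = U_{r',r'} ⊕ U_{α_{i_0}, r−r'} ⊕ U_{n−r'',0}, and consequently rk_{P_M}(F) = dim(P_{M/F}) = 0 if r = r'' and rk_{P_M}(F) = α_{i_0} − 1 if r < r''. -/

import Mathlib

open scoped Classical Pointwise BigOperators


/-- The dot product pairing on `ℝⁿ`. -/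
def dotp {n : ℕ} (ω x : Fin n → ℝ) : ℝ := ∑ i, ω i * x i

/-- The set of points of `Q` on which the linear functional `⟨ω, ·⟩` attains its maximum. -/
def argmaxSet {n : ℕ} (Q : Set (Fin n → ℝ)) (ω : Fin n → ℝ) : Set (Fin n → ℝ) :=
  {x | x ∈ Q ∧ ∀ y ∈ Q, dotp ω y ≤ dotp ω x}

/-- `G` is a face of `Q` : it is the argmax set of some linear functional. -/
def IsFace {n : ℕ} (Q G : Set (Fin n → ℝ)) : Prop := ∃ ω : Fin n → ℝ, G = argmaxSet Q ω

/-- The dimension of a convex body: the rank of its direction vector space. -/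
noncomputable def pdim {n : ℕ} (s : Set (Fin n → ℝ)) : ℕ := Module.finrank ℝ (vectorSpan ℝ s)

/-- `Q` is a (nonempty) convex polytope. -/
def IsPolytope {n : ℕ} (Q : Set (Fin n → ℝ)) : Prop :=
  ∃ V : Finset (Fin n → ℝ), V.Nonempty ∧ Q = convexHull ℝ (V : Set (Fin n → ℝ))

/-- A flag `∅ ⊂ F₁ ⊂ ⋯ ⊂ F_k ⊂ [n]` of subsets of `[n]`, recorded by its set
`C = {F₁,…,F_k}` of proper nonempty intermediate subsets, which form a chain. -/
def IsFlag (n : ℕ) (C : Finset (Finset (Fin n))) : Prop :=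
  (∀ A ∈ C, A.Nonempty ∧ A ≠ Finset.univ) ∧ (∀ A ∈ C, ∀ B ∈ C, A ⊆ B ∨ B ⊆ A)

/-- The level of an element: the number of members of the chain not containing it.  Elements of
`F_i ∖ F_{i-1}` have level `i - 1`-ish: level `0` on the smallest set, etc. -/
def lv {n : ℕ} (C : Finset (Finset (Fin n))) (p : Fin n) : ℕ := (C.filter (fun A => p ∉ A)).card

/-- The `j`-th member `F_j` of the full chain `∅ = F₀ ⊂ F₁ ⊂ ⋯ ⊂ F_{k+1} = [n]` of the flag. -/
def fullChain {n : ℕ} (C : Finset (Finset (Fin n))) (j : ℕ) : Finset (Fin n) :=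
  Finset.univ.filter (fun p => lv C p < j)

/-- The type of a flag: the composition `(|F₁|-|F₀|, …, |F_{k+1}|-|F_k|)` of `n`. -/
def flagType {n : ℕ} (C : Finset (Finset (Fin n))) : List ℕ :=
  (List.range (C.card + 1)).map (fun j => (fullChain C (j + 1)).card - (fullChain C j).card)

/-- The relative interior of the braid cone of a flag: weight vectors `ω` that are constant on
each block `F_i ∖ F_{i-1}` and satisfy `ω|_{F_{i+1}∖F_i} < ω|_{F_i∖F_{i-1}}` (strictly
decreasing along the flag). -/
def relintBraidCone {n : ℕ} (C : Finset (Finset (Fin n))) : Set (Fin n → ℝ) :=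
  {x | ∀ p q : Fin n, ((∀ A ∈ C, (p ∈ A ↔ q ∈ A)) → x p = x q) ∧
      ((∃ A ∈ C, p ∈ A ∧ q ∉ A) → x q < x p)}

/-- Homogeneous quasisymmetric functions in the monomial basis: finitely supported
coefficient functions on compositions (lists of positive integers). -/
abbrev QS : Type := (List ℕ) →₀ ℚ

/-- The monomial quasisymmetric function `M_α`. -/
noncomputable def Mc (l : List ℕ) : QS := Finsupp.single l 1

/-- The principal specialization at `-1`:  `ps(M_α)(-1) = (-1)^{k(α)}`, extended linearly. -/
noncomputable def psNeg (f : QS) : ℚ := f.sum (fun l c => c * (-1) ^ l.length)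

/-- The `f`-polynomial of a polytope `P ⊆ ℝⁿ`, evaluated at `t`. -/
noncomputable def fPoly {n : ℕ} (P : Set (Fin n → ℝ)) (t : ℚ) : ℚ :=
  ∑ i ∈ Finset.range n, ((Set.ncard {G : Set (Fin n → ℝ) | IsFace P G ∧ pdim G = i} : ℚ) * t ^ i)

/-- The weighted quasisymmetric enumerator `F_q(Q) = Σ_F q^{rk(F)} M_{type(F)}`, where the rank
statistic `rk` on flags is given as an argument. -/
noncomputable def FqEnum (n : ℕ) (rk : Finset (Finset (Fin n)) → ℕ) (q : ℚ) : QS :=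
  ∑ C : Finset (Finset (Fin n)), if IsFlag n C then q ^ (rk C) • Mc (flagType C) else 0

/-- A matroid on `[n]`, given by its nonempty collection of bases satisfying the exchange
property. -/
def IsMatroid (n : ℕ) (𝓑 : Finset (Finset (Fin n))) : Prop :=
  𝓑.Nonempty ∧
    ∀ B₁ ∈ 𝓑, ∀ B₂ ∈ 𝓑, ∀ i ∈ B₁ \ B₂, ∃ j ∈ B₂ \ B₁, insert j (B₁.erase i) ∈ 𝓑

/-- The indicator vector `e_B = Σ_{i ∈ B} e_i` of a subset `B ⊆ [n]`. -/
def indVec {n : ℕ} (B : Finset (Fin n)) : Fin n → ℝ := fun i => if i ∈ B then 1 else 0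

/-- The matroid base polytope `P_M = Conv{e_B : B ∈ 𝓑(M)}`. -/
noncomputable def basePoly {n : ℕ} (𝓑 : Finset (Finset (Fin n))) : Set (Fin n → ℝ) :=
  convexHull ℝ (indVec '' (𝓑 : Set (Finset (Fin n))))

/-- The basis-exchange relation whose equivalence classes are the connected components of the
matroid: `i ~ j` iff there are bases `B₁, B₂` with `i ∈ B₁` and `B₂ = (B₁ ∖ {i}) ∪ {j}`. -/
def mRel {n : ℕ} (𝓑 : Finset (Finset (Fin n))) (i j : Fin n) : Prop :=
  ∃ B₁ ∈ 𝓑, i ∈ B₁ ∧ insert j (B₁.erase i) ∈ 𝓑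

/-- The number of connected components of (the matroid with bases) `𝓑` that meet the ground set
`ground`: the number of equivalence classes of the component relation restricted to `ground`. -/
noncomputable def cOn {n : ℕ} (ground : Finset (Fin n)) (𝓑 : Finset (Finset (Fin n))) : ℕ :=
  Set.ncard (Quot.mk (mRel 𝓑) '' (ground : Set (Fin n)))

/-- A subset is independent if it is contained in a basis. -/
def mIndep {n : ℕ} (𝓑 : Finset (Finset (Fin n))) (I : Finset (Fin n)) : Prop :=
  ∃ B ∈ 𝓑, I ⊆ B

/-- The bases of the restriction `M|_A`: maximal independent subsets of `A`. -/
noncomputable def basesRestrict {n : ℕ} (𝓑 : Finset (Finset (Fin n))) (A : Finset (Fin n)) :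
    Finset (Finset (Fin n)) :=
  A.powerset.filter (fun I => mIndep 𝓑 I ∧ ∀ J ∈ A.powerset, mIndep 𝓑 J → I ⊆ J → I = J)

/-- The bases of the contraction `M/A`: sets `I` disjoint from `A` such that `I ∪ B_A` is a basis
for some basis `B_A` of `M|_A`. -/
noncomputable def basesContract {n : ℕ} (𝓑 : Finset (Finset (Fin n))) (A : Finset (Fin n)) :
    Finset (Finset (Fin n)) :=
  (Finset.univ : Finset (Fin n)).powerset.filter
    (fun I => Disjoint I A ∧ ∃ BA ∈ basesRestrict 𝓑 A, I ∪ BA ∈ 𝓑)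

/-- The bases of the minor `(M|_X)/Y`. -/
noncomputable def minorBases {n : ℕ} (𝓑 : Finset (Finset (Fin n))) (X Y : Finset (Fin n)) :
    Finset (Finset (Fin n)) :=
  basesContract (basesRestrict 𝓑 X) Y

/-- The rank `r(A)` of a subset `A`: the size of a basis of `M|_A`. -/
noncomputable def rankOf {n : ℕ} (𝓑 : Finset (Finset (Fin n))) (A : Finset (Fin n)) : ℕ :=
  (basesRestrict 𝓑 A).sup Finset.card

/-- The bases of the matroid `M/F = M_ω` attached to a flag `F` (for any `ω` in the relative
interior of the braid cone of `F`): the bases of maximum `ω`-weight, i.e. those `B` with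
`|B ∩ F_i| = r(F_i)` for every member `F_i` of the full chain of the flag. -/
noncomputable def flagQuotBases {n : ℕ} (𝓑 : Finset (Finset (Fin n))) (C : Finset (Finset (Fin n))) :
    Finset (Finset (Fin n)) :=
  𝓑.filter (fun B => ∀ j ∈ Finset.range (C.card + 2), (B ∩ fullChain C j).card = rankOf 𝓑 (fullChain C j))

/-- The rank statistic `rk_{P_M}(F) = Σ_j rk((M|_{F_j})/F_{j-1})` of a flag, where
`rk(N) = (size of ground set of N) - c(N)`. -/
noncomputable def rkM {n : ℕ} (𝓑 : Finset (Finset (Fin n))) (C : Finset (Finset (Fin n))) : ℕ :=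
  ∑ j ∈ Finset.range (C.card + 1),
    ((fullChain C (j + 1)).card - (fullChain C j).card -
      cOn ((fullChain C (j + 1)) \ (fullChain C j))
        (minorBases 𝓑 (fullChain C (j + 1)) (fullChain C j)))

/-- The bases of the uniform matroid `U_{n,r}`: all `r`-element subsets of `[n]`. -/
def uniformBases (n r : ℕ) : Finset (Finset (Fin n)) :=
  (Finset.univ : Finset (Fin n)).powersetCard r

/- ### Auxiliary lemmas -/

lemma fullChain_mono' {n : ℕ} (C : Finset (Finset (Fin n))) {j j' : ℕ} (h : j ≤ j') :
    fullChain C j ⊆ fullChain C j' := by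
  intro p hp
  simp only [fullChain, Finset.mem_filter] at *
  exact ⟨hp.1, lt_of_lt_of_le hp.2 h⟩

lemma fullChain_zero' {n : ℕ} (C : Finset (Finset (Fin n))) : fullChain C 0 = ∅ := by
  simp [fullChain]

lemma fullChain_top' {n : ℕ} (C : Finset (Finset (Fin n))) :
    fullChain C (C.card + 1) = Finset.univ := by
  ext p
  simp only [fullChain, Finset.mem_filter, Finset.mem_univ, true_and, iff_true]
  exact Nat.lt_succ_of_le (Finset.card_filter_le _ _)

lemma mem_uniformBases' {n r : ℕ} (B : Finset (Fin n)) :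
    B ∈ uniformBases n r ↔ B.card = r := by
  simp [uniformBases, Finset.mem_powersetCard_univ]

lemma mIndep_uniform' {n r : ℕ} (hrn : r ≤ n) (I : Finset (Fin n)) :
    mIndep (uniformBases n r) I ↔ I.card ≤ r := by
  constructor
  · rintro ⟨B, hB, hIB⟩
    rw [mem_uniformBases'] at hB
    exact hB ▸ Finset.card_le_card hIB
  · intro h
    obtain ⟨B, hIB, -, hBcard⟩ :=
      Finset.exists_subsuperset_card_eq (Finset.subset_univ I) h (by simpa using hrn)
    exact ⟨B, (mem_uniformBases' B).mpr hBcard, hIB⟩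

lemma rankOf_uniform' {n r : ℕ} (hrn : r ≤ n) (A : Finset (Fin n)) :
    rankOf (uniformBases n r) A = min A.card r := by
  apply le_antisymm
  · apply Finset.sup_le
    intro I hI
    simp only [basesRestrict, Finset.mem_filter, Finset.mem_powerset] at hI
    exact le_min (Finset.card_le_card hI.1) ((mIndep_uniform' hrn I).mp hI.2.1)
  · obtain ⟨I, hIA, hIcard⟩ := Finset.exists_subset_card_eq (min_le_left A.card r)
    have hImem : I ∈ basesRestrict (uniformBases n r) A := by
      simp only [basesRestrict, Finset.mem_filter, Finset.mem_powerset]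
      refine ⟨hIA, (mIndep_uniform' hrn I).mpr (hIcard ▸ min_le_right _ _), ?_⟩
      intro J hJ hJind hIJ
      refine Finset.eq_of_subset_of_card_le hIJ ?_
      rw [hIcard]
      exact le_min (Finset.card_le_card hJ) ((mIndep_uniform' hrn J).mp hJind)
    calc min A.card r = I.card := hIcard.symm
    _ ≤ _ := Finset.le_sup hImem

lemma indVec_eq_sum' {n : ℕ} (B : Finset (Fin n)) :
    indVec B = ∑ i ∈ B, Pi.single i (1:ℝ) := by
  funext j
  rw [Finset.sum_apply]
  simp only [Pi.single_apply]
  rw [Finset.sum_ite_eq B j (fun _ => (1:ℝ))]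
  simp [indVec]

lemma indVec_sub_eq' {n : ℕ} (B B' : Finset (Fin n)) :
    indVec B - indVec B'
      = ∑ i ∈ B \ B', Pi.single i (1:ℝ) - ∑ i ∈ B' \ B, Pi.single i (1:ℝ) := by
  rw [indVec_eq_sum', indVec_eq_sum',
    ← Finset.sum_inter_add_sum_sdiff B B' (fun i => Pi.single i (1:ℝ)),
    ← Finset.sum_inter_add_sum_sdiff B' B (fun i => Pi.single i (1:ℝ)),
    Finset.inter_comm B' B]
  abel

lemma pdim_hypersimplex_like {n : ℕ} (F' F'' : Finset (Fin n)) (r : ℕ)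
    (hsub : F' ⊆ F'') (h1 : F'.card < r) (h2 : r < F''.card) :
    pdim (basePoly ((uniformBases n r).filter (fun B => F' ⊆ B ∧ B ⊆ F'')))
      = (F''.card - F'.card) - 1 := by
  classical
  set S : Finset (Fin n) := F'' \ F' with hS
  have hScard : S.card = F''.card - F'.card := Finset.card_sdiff_of_subset hsub
  have hSpos : 0 < S.card := by omega
  obtain ⟨i0, hi0S⟩ := Finset.card_pos.mp hSpos
  set X : Set (Fin n → ℝ) :=
    indVec '' ((uniformBases n r).filter (fun B => F' ⊆ B ∧ B ⊆ F'') : Set (Finset (Fin n))) with hX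
  set v : {i // i ∈ S.erase i0} → (Fin n → ℝ) :=
    fun i => Pi.single i.1 (1:ℝ) - Pi.single i0 1 with hv
  -- linear independence
  have hli : LinearIndependent ℝ v := by
    rw [Fintype.linearIndependent_iff]
    intro g hg j
    have hj := congrFun hg j.1
    have hji0 : j.1 ≠ i0 := (Finset.mem_erase.mp j.2).1
    simp only [hv, Finset.sum_apply, Pi.smul_apply, Pi.sub_apply, Pi.single_apply,
      smul_eq_mul, Pi.zero_apply, if_neg hji0, sub_zero] at hj
    simp only [Subtype.coe_inj, mul_ite, mul_one, mul_zero] at hj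
    rwa [Finset.sum_ite_eq Finset.univ j g, if_pos (Finset.mem_univ j)] at hj
  -- membership of single-differences in span
  have hw : ∀ i ∈ S, Pi.single i (1:ℝ) - Pi.single i0 1 ∈ Submodule.span ℝ (Set.range v) := by
    intro i hi
    by_cases h : i = i0
    · subst h; simp
    · exact Submodule.subset_span ⟨⟨i, Finset.mem_erase.mpr ⟨h, hi⟩⟩, rfl⟩
  have key : ∀ B B' : Finset (Fin n), B.card = r → F' ⊆ B → B ⊆ F'' →
      B'.card = r → F' ⊆ B' → B' ⊆ F'' →
      indVec B - indVec B' ∈ Submodule.span ℝ (Set.range v) := by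
    intro B B' hB1 hB2 hB3 hB1' hB2' hB3'
    have hBS : B \ B' ⊆ S := by
      intro x hx
      rw [Finset.mem_sdiff] at hx ⊢
      exact ⟨hB3 hx.1, fun hxF => hx.2 (hB2' hxF)⟩
    have hBS' : B' \ B ⊆ S := by
      intro x hx
      rw [Finset.mem_sdiff] at hx ⊢
      exact ⟨hB3' hx.1, fun hxF => hx.2 (hB2 hxF)⟩
    have hcard : (B \ B').card = (B' \ B).card := Finset.card_sdiff_comm (by rw [hB1, hB1'])
    have hrw : indVec B - indVec B'
        = (∑ i ∈ B \ B', (Pi.single i (1:ℝ) - Pi.single i0 1))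
          - ∑ i ∈ B' \ B, (Pi.single i (1:ℝ) - Pi.single i0 1) := by
      rw [indVec_sub_eq', Finset.sum_sub_distrib, Finset.sum_sub_distrib,
        Finset.sum_const, Finset.sum_const, hcard]
      abel
    rw [hrw]
    exact sub_mem (Submodule.sum_mem _ fun i hi => hw i (hBS hi))
      (Submodule.sum_mem _ fun i hi => hw i (hBS' hi))
  have hspan_le : vectorSpan ℝ X ≤ Submodule.span ℝ (Set.range v) := by
    rw [vectorSpan_def, Submodule.span_le]
    rintro z hz
    rw [Set.mem_vsub] at hz
    obtain ⟨x, hx, y, hy, rfl⟩ := hz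
    obtain ⟨B, hB, rfl⟩ := hx
    obtain ⟨B', hB', rfl⟩ := hy
    rw [Finset.mem_coe, Finset.mem_filter, mem_uniformBases'] at hB hB'
    rw [vsub_eq_sub]
    exact key B B' hB.1 hB.2.1 hB.2.2 hB'.1 hB'.2.1 hB'.2.2
  have hspan_ge : Submodule.span ℝ (Set.range v) ≤ vectorSpan ℝ X := by
    rw [Submodule.span_le]
    rintro z ⟨⟨i, hiE⟩, rfl⟩
    obtain ⟨hi_ne, hiS⟩ := Finset.mem_erase.mp hiE
    have hiF'' : i ∈ F'' := (Finset.mem_sdiff.mp hiS).1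
    have hiF' : i ∉ F' := (Finset.mem_sdiff.mp hiS).2
    have hi0F'' : i0 ∈ F'' := (Finset.mem_sdiff.mp hi0S).1
    have hi0F' : i0 ∉ F' := (Finset.mem_sdiff.mp hi0S).2
    have hpair : ({i, i0} : Finset (Fin n)) ⊆ S := by
      intro x hx
      rcases Finset.mem_insert.mp hx with rfl | hx
      · exact hiS
      · rw [Finset.mem_singleton] at hx; subst hx; exact hi0S
    have hpaircard : ({i, i0} : Finset (Fin n)).card = 2 := by
      rw [Finset.card_insert_of_notMem (by simp [hi_ne]), Finset.card_singleton]
    have hTex : r - F'.card - 1 ≤ (S \ {i, i0}).card := by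
      rw [Finset.card_sdiff_of_subset hpair, hpaircard]
      omega
    obtain ⟨T, hTsub, hTcard⟩ := Finset.exists_subset_card_eq hTex
    have hTS : T ⊆ S := hTsub.trans (Finset.sdiff_subset)
    have hTF'' : T ⊆ F'' := fun x hx => (Finset.mem_sdiff.mp (hTS hx)).1
    have hTF' : Disjoint F' T := by
      rw [Finset.disjoint_right]
      intro x hx
      exact (Finset.mem_sdiff.mp (hTS hx)).2
    have hiT : i ∉ T := fun h => by
      have := hTsub h
      rw [Finset.mem_sdiff] at this
      exact this.2 (by simp)
    have hi0T : i0 ∉ T := fun h => by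
      have := hTsub h
      rw [Finset.mem_sdiff] at this
      exact this.2 (by simp)
    have hiFT : i ∉ F' ∪ T := by simp [hiF', hiT]
    have hi0FT : i0 ∉ F' ∪ T := by simp [hi0F', hi0T]
    have hFTcard : (F' ∪ T).card = F'.card + (r - F'.card - 1) := by
      rw [Finset.card_union_of_disjoint hTF', hTcard]
    set B : Finset (Fin n) := insert i (F' ∪ T) with hB
    set B' : Finset (Fin n) := insert i0 (F' ∪ T) with hB'
    have hBcard : B.card = r := by
      rw [hB, Finset.card_insert_of_notMem hiFT, hFTcard]; omega
    have hB'card : B'.card = r := by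
      rw [hB', Finset.card_insert_of_notMem hi0FT, hFTcard]; omega
    have hBmem : B ∈ (uniformBases n r).filter (fun B => F' ⊆ B ∧ B ⊆ F'') := by
      rw [Finset.mem_filter, mem_uniformBases']
      refine ⟨hBcard, fun x hx => by simp [hB, Finset.mem_union, hx], ?_⟩
      intro x hx
      rcases Finset.mem_insert.mp hx with rfl | hx
      · exact hiF''
      · rcases Finset.mem_union.mp hx with hx | hx
        · exact hsub hx
        · exact hTF'' hx
    have hB'mem : B' ∈ (uniformBases n r).filter (fun B => F' ⊆ B ∧ B ⊆ F'') := by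
      rw [Finset.mem_filter, mem_uniformBases']
      refine ⟨hB'card, fun x hx => by simp [hB', Finset.mem_union, hx], ?_⟩
      intro x hx
      rcases Finset.mem_insert.mp hx with rfl | hx
      · exact hi0F''
      · rcases Finset.mem_union.mp hx with hx | hx
        · exact hsub hx
        · exact hTF'' hx
    have hBB' : B \ B' = {i} := by
      ext x
      simp only [hB, hB', Finset.mem_sdiff, Finset.mem_insert, Finset.mem_union,
        Finset.mem_singleton]
      constructor
      · rintro ⟨h1', h2'⟩
        push_neg at h2'
        rcases h1' with rfl | h1' | h1'
        · rfl
        · exact absurd h1' h2'.2.1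
        · exact absurd h1' h2'.2.2
      · rintro rfl
        exact ⟨Or.inl rfl, by push_neg; exact ⟨hi_ne, hiF', hiT⟩⟩
    have hB'B : B' \ B = {i0} := by
      ext x
      simp only [hB, hB', Finset.mem_sdiff, Finset.mem_insert, Finset.mem_union,
        Finset.mem_singleton]
      constructor
      · rintro ⟨h1', h2'⟩
        push_neg at h2'
        rcases h1' with rfl | h1' | h1'
        · rfl
        · exact absurd h1' h2'.2.1
        · exact absurd h1' h2'.2.2
      · rintro rfl
        exact ⟨Or.inl rfl, by push_neg; exact ⟨fun h => hi_ne h.symm, hi0F', hi0T⟩⟩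
    have hdiff : indVec B - indVec B' = Pi.single i (1:ℝ) - Pi.single i0 1 := by
      rw [indVec_sub_eq', hBB', hB'B, Finset.sum_singleton, Finset.sum_singleton]
    rw [show v ⟨i, hiE⟩ = Pi.single i (1:ℝ) - Pi.single i0 1 from rfl, ← hdiff]
    have := vsub_mem_vectorSpan ℝ (Set.mem_image_of_mem indVec (Finset.mem_coe.mpr hBmem))
      (Set.mem_image_of_mem indVec (Finset.mem_coe.mpr hB'mem))
    rwa [vsub_eq_sub] at this
  have hvs : vectorSpan ℝ (convexHull ℝ X) = vectorSpan ℝ X := by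
    rw [← direction_affineSpan, affineSpan_convexHull, direction_affineSpan]
  unfold pdim basePoly
  rw [← hX, hvs, le_antisymm hspan_le hspan_ge, finrank_span_eq_card hli]
  rw [Fintype.card_coe, Finset.card_erase_of_mem hi0S, hScard]

/-- Let `M = U_{n,r}` be the uniform matroid with `0 < r < n` and let `F` be a
flag of type `(α₁,…,α_k) ⊨ n`.  With `i₀ = min{i : α₁+⋯+α_i ≥ r}`, `r' = α₁+⋯+α_{i₀-1}` and
`r'' = r' + α_{i₀}`, the matroid `M/F` attached to the face `π_{P_M}(F)` decomposes as
`M/F = U_{r',r'} ⊕ U_{α_{i₀}, r-r'} ⊕ U_{n-r'',0}` — its bases are exactly the `r`-subsets `B`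
with `F_{i₀-1} ⊆ B ⊆ F_{i₀}` — and consequently
`rk_{P_M}(F) = dim(P_{M/F}) = 0` if `r = r''` and `= α_{i₀} - 1` if `r < r''`. -/
theorem uniform_matroid_flag_face (n r : ℕ) (hr : 0 < r) (hrn : r < n)
    (C : Finset (Finset (Fin n))) (hC : IsFlag n C) :
    let i₀ : ℕ := sInf {i : ℕ | r ≤ (fullChain C i).card}
    flagQuotBases (uniformBases n r) C
        = (uniformBases n r).filter
            (fun B => fullChain C (i₀ - 1) ⊆ B ∧ B ⊆ fullChain C i₀) ∧
    pdim (basePoly (flagQuotBases (uniformBases n r) C))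
        = (if r = (fullChain C i₀).card then 0
           else ((fullChain C i₀).card - (fullChain C (i₀ - 1)).card) - 1) := by
  intro i₀
  have hrn' : r ≤ n := le_of_lt hrn
  have hmem : (C.card + 1) ∈ {i : ℕ | r ≤ (fullChain C i).card} := by
    simp only [Set.mem_setOf_eq, fullChain_top', Finset.card_univ, Fintype.card_fin]
    exact hrn'
  have hi₀r : r ≤ (fullChain C i₀).card := Nat.sInf_mem ⟨_, hmem⟩
  have hi₀pos : 0 < i₀ := by
    rcases Nat.eq_zero_or_pos i₀ with h | h
    · exfalso
      rw [show i₀ = 0 from h, fullChain_zero', Finset.card_empty] at hi₀r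
      omega
    · exact h
  have hlt : (fullChain C (i₀ - 1)).card < r := by
    by_contra h
    push_neg at h
    have := Nat.sInf_le (show (i₀ - 1) ∈ {i : ℕ | r ≤ (fullChain C i).card} from h)
    omega
  have hle : i₀ ≤ C.card + 1 := Nat.sInf_le hmem
  have hsub : fullChain C (i₀ - 1) ⊆ fullChain C i₀ := fullChain_mono' C (Nat.sub_le _ _)
  have hEq : flagQuotBases (uniformBases n r) C = (uniformBases n r).filter
      (fun B => fullChain C (i₀ - 1) ⊆ B ∧ B ⊆ fullChain C i₀) := by
    ext B
    simp only [flagQuotBases, Finset.mem_filter, Finset.mem_range, mem_uniformBases']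
    constructor
    · rintro ⟨hBr, hall⟩
      refine ⟨hBr, ?_, ?_⟩
      · have h1 := hall (i₀ - 1) (by omega)
        rw [rankOf_uniform' hrn', min_eq_left hlt.le] at h1
        have h2 := Finset.eq_of_subset_of_card_le
          (Finset.inter_subset_right : B ∩ fullChain C (i₀ - 1) ⊆ _) (le_of_eq h1.symm)
        rw [← h2]
        exact Finset.inter_subset_left
      · have h1 := hall i₀ (by omega)
        rw [rankOf_uniform' hrn', min_eq_right hi₀r] at h1
        have h2 := Finset.eq_of_subset_of_card_le
          (Finset.inter_subset_left : B ∩ fullChain C i₀ ⊆ B) (by omega)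
        exact Finset.inter_eq_left.mp h2
    · rintro ⟨hBr, h1, h2⟩
      refine ⟨hBr, ?_⟩
      intro j hj
      rw [rankOf_uniform' hrn']
      by_cases hcase : j < i₀
      · have hjsub : fullChain C j ⊆ fullChain C (i₀ - 1) := fullChain_mono' C (by omega)
        rw [Finset.inter_eq_right.mpr (hjsub.trans h1)]
        exact (min_eq_left (le_of_lt (lt_of_le_of_lt (Finset.card_le_card hjsub) hlt))).symm
      · push_neg at hcase
        rw [Finset.inter_eq_left.mpr (h2.trans (fullChain_mono' C hcase)), hBr]
        exact (min_eq_right (hi₀r.trans (Finset.card_le_card (fullChain_mono' C hcase)))).symm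
  refine ⟨hEq, ?_⟩
  rw [hEq]
  by_cases hc : r = (fullChain C i₀).card
  · rw [if_pos hc]
    have hset : (uniformBases n r).filter
        (fun B => fullChain C (i₀ - 1) ⊆ B ∧ B ⊆ fullChain C i₀) = {fullChain C i₀} := by
      ext B
      simp only [Finset.mem_filter, mem_uniformBases', Finset.mem_singleton]
      constructor
      · rintro ⟨hBr, -, hB2⟩
        exact Finset.eq_of_subset_of_card_le hB2 (by omega)
      · rintro rfl
        exact ⟨hc.symm, hsub, Finset.Subset.refl _⟩
    rw [hset]
    unfold pdim basePoly
    rw [Finset.coe_singleton, Set.image_singleton, convexHull_singleton, vectorSpan_singleton]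
    exact finrank_bot ℝ _
  · rw [if_neg hc]
    exact pdim_hypersimplex_like (fullChain C (i₀ - 1)) (fullChain C i₀) r hsub hlt
      (lt_of_le_of_ne hi₀r hc)
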